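/- Let 0 < α ≤ β and let g : [0,∞) → ℝ be non-increasing and Lipschitz with 0 < g(t) ≤ 1 for all t. Define F(r,s,ξ,η) := ‖ξ‖ + g(‖ξ‖)‖P_s η‖ + ‖r P_s η + s⊗ξ‖ and QF(r,s,ξ,η) := inf{ ∫_Q F(r,s, ξ+∇φ(y), η+∇ψ(y)) dy : φ : ℝ² → ℝ and ψ : ℝ² → ℝ³ Lipschitz, vanishing outside the open unit cube Q := (−1/2,1/2)² }. Then there exists a constant c > 0, depending only on α, β, and the Lipschitz constant of g, such that for all r, r̄ ∈ [α,β], all s, s̄ ∈ S², all ξ, ξ̄ ∈ ℝ², all η ∈ ℝ^{3×2} with sᵀη = 0, and all η̄ ∈ ℝ^{3×2} with s̄ᵀη̄ = 0, one has |QF(r,s,ξ,η) − QF(r̄,s̄,ξ̄,η̄)| ≤ c‖η−η̄‖ + c(|r−r̄| + ‖s−s̄‖ + ‖ξ−ξ̄‖)(1 + ‖ξ‖ + ‖ξ̄‖ + ‖η‖ + ‖η̄‖). -/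

import Mathlib

open MeasureTheory

noncomputable section

abbrev E2 : Type := EuclideanSpace ℝ (Fin 2)
abbrev E3 : Type := EuclideanSpace ℝ (Fin 3)
abbrev E32 : Type := EuclideanSpace ℝ (Fin 3 × Fin 2)

/-- The tensor product `s ⊗ ξ`, viewed as a 3×2 matrix endowed with the
Frobenius (Euclidean) norm. -/
def tens (s : E3) (ξ : E2) : E32 := WithLp.toLp 2 (fun p : Fin 3 × Fin 2 => s p.1 * ξ p.2)

/-- The orthogonal projection `P_s η = (I - s sᵀ) η` of a 3×2 matrix, columnwise,
onto the tangent plane `T_s(S²)`. -/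
def Pproj (s : E3) (η : E32) : E32 :=
  WithLp.toLp 2 (fun p : Fin 3 × Fin 2 => η p - s p.1 * ∑ i : Fin 3, s i * η (i, p.2))

/-- The modified integrand
`F(r,s,ξ,η) = ‖ξ‖ + g(‖ξ‖)‖P_s η‖ + ‖r P_s η + s⊗ξ‖`. -/
def Fdens (g : ℝ → ℝ) (r : ℝ) (s : E3) (ξ : E2) (η : E32) : ℝ :=
  ‖ξ‖ + g ‖ξ‖ * ‖Pproj s η‖ + ‖r • Pproj s η + tens s ξ‖

/-- The open unit cube `Q = (-1/2, 1/2)²`. -/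
def cubeQ : Set E2 := {y | ∀ j, y j ∈ Set.Ioo (-(1/2) : ℝ) (1/2)}

/-- The gradient `∇φ(y) ∈ ℝ²` of a scalar function `φ : ℝ² → ℝ`. -/
def gradv (φ : E2 → ℝ) (y : E2) : E2 :=
  WithLp.toLp 2 (fun j => fderiv ℝ φ y (EuclideanSpace.single j 1))

/-- The gradient `∇ψ(y) ∈ ℝ^{3×2}` of a vector-valued function `ψ : ℝ² → ℝ³`. -/
def gradm (ψ : E2 → E3) (y : E2) : E32 :=
  WithLp.toLp 2 (fun p : Fin 3 × Fin 2 => fderiv ℝ ψ y (EuclideanSpace.single p.2 1) p.1)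

/-- The quasiconvex envelope `QF(r,s,ξ,η)` of the modified integrand `F`:
the infimum of `∫_Q F(r,s,ξ+∇φ,η+∇ψ)` over Lipschitz `φ, ψ` vanishing
outside the unit cube `Q`. -/
def QF (g : ℝ → ℝ) (r : ℝ) (s : E3) (ξ : E2) (η : E32) : ℝ :=
  sInf {v : ℝ | ∃ φ : E2 → ℝ, ∃ ψ : E2 → E3,
    (∃ K : NNReal, LipschitzWith K φ) ∧ (∃ K : NNReal, LipschitzWith K ψ) ∧
    (∀ y ∉ cubeQ, φ y = 0) ∧ (∀ y ∉ cubeQ, ψ y = 0) ∧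
    v = ∫ y in cubeQ, Fdens g r s (ξ + gradv φ y) (η + gradm ψ y)}

set_option maxHeartbeats 1000000

local notation "⟪" x ", " y "⟫" => @inner ℝ _ _ x y

lemma aux_en_norm_sq {ι : Type*} [Fintype ι] (x : EuclideanSpace ℝ ι) :
    ‖x‖ ^ 2 = ∑ i, x i ^ 2 := by
  rw [EuclideanSpace.norm_eq, Real.sq_sqrt (by positivity)]
  simp [sq_abs]

def colv (m : E32) (j : Fin 2) : E3 := WithLp.toLp 2 (fun i => m (i, j))

lemma aux_norm_sq_E32 (m : E32) : ‖m‖ ^ 2 = ∑ j, ‖colv m j‖ ^ 2 := by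
  simp_rw [aux_en_norm_sq, colv]
  rw [Fintype.sum_prod_type, Finset.sum_comm]

lemma aux_inner_E3 (x y : E3) : ⟪x, y⟫ = ∑ i, x i * y i := by
  simp [PiLp.inner_apply, RCLike.inner_apply, conj_trivial]
  exact Finset.sum_congr rfl fun i _ => mul_comm _ _

lemma colv_add (a b : E32) (j : Fin 2) : colv (a + b) j = colv a j + colv b j := rfl

lemma colv_smul (r : ℝ) (a : E32) (j : Fin 2) : colv (r • a) j = r • colv a j := rfl

lemma colv_Pproj (s : E3) (m : E32) (j : Fin 2) :
    colv (Pproj s m) j = colv m j - ⟪s, colv m j⟫ • s := by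
  ext i
  simp only [colv, Pproj, aux_inner_E3, PiLp.sub_apply, PiLp.smul_apply, smul_eq_mul, PiLp.toLp_apply]
  ring

lemma colv_tens (s : E3) (ξ : E2) (j : Fin 2) : colv (tens s ξ) j = ξ j • s := by
  ext i
  simp only [colv, tens, PiLp.smul_apply, smul_eq_mul, PiLp.toLp_apply]
  ring

lemma colv_ext {a b : E32} (h : ∀ j, colv a j = colv b j) : a = b := by
  ext p
  simpa [colv] using congrArg (fun v : E3 => v p.1) (h p.2)

def tang (s : E3) (m : E32) : Prop := ∀ j, ⟪s, colv m j⟫ = 0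

lemma tang_add {s : E3} {a b : E32} (ha : tang s a) (hb : tang s b) : tang s (a + b) := by
  intro j
  rw [colv_add, inner_add_right, ha j, hb j, add_zero]

lemma tang_Pproj {s : E3} (hs : ‖s‖ = 1) (m : E32) : tang s (Pproj s m) := by
  intro j
  rw [colv_Pproj, inner_sub_right, real_inner_smul_right, real_inner_self_eq_norm_sq, hs]
  ring

lemma Pproj_eq_self {s : E3} {m : E32} (hm : tang s m) : Pproj s m = m := by
  apply colv_ext
  intro j
  rw [colv_Pproj, hm j, zero_smul, sub_zero]

lemma Pproj_add (s : E3) (a b : E32) : Pproj s (a + b) = Pproj s a + Pproj s b := by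
  apply colv_ext
  intro j
  simp only [colv_Pproj, colv_add, inner_add_right]
  module

lemma norm_tens {s : E3} (hs : ‖s‖ = 1) (ξ : E2) : ‖tens s ξ‖ = ‖ξ‖ := by
  have h : ‖tens s ξ‖ ^ 2 = ‖ξ‖ ^ 2 := by
    rw [aux_norm_sq_E32, aux_en_norm_sq]
    refine Finset.sum_congr rfl fun j _ => ?_
    rw [colv_tens, norm_smul, hs, mul_one, Real.norm_eq_abs, sq_abs]
  calc ‖tens s ξ‖ = √(‖tens s ξ‖ ^ 2) := (Real.sqrt_sq (norm_nonneg _)).symm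
    _ = √(‖ξ‖ ^ 2) := by rw [h]
    _ = ‖ξ‖ := Real.sqrt_sq (norm_nonneg _)

lemma aux_orth_norm {r : ℝ} {s : E3} (hs : ‖s‖ = 1) {p : E32} (hp : tang s p) (ξ : E2) :
    ‖r • p + tens s ξ‖ ^ 2 = r ^ 2 * ‖p‖ ^ 2 + ‖ξ‖ ^ 2 := by
  rw [aux_norm_sq_E32]
  have hcol : ∀ j, ‖colv (r • p + tens s ξ) j‖ ^ 2 = r ^ 2 * ‖colv p j‖ ^ 2 + ξ j ^ 2 := by
    intro j
    rw [colv_add, colv_smul, colv_tens, norm_add_sq_real]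
    rw [real_inner_smul_left, real_inner_smul_right, real_inner_comm, hp j]
    rw [norm_smul, norm_smul, hs, mul_one, Real.norm_eq_abs, Real.norm_eq_abs]
    rw [mul_pow, sq_abs, sq_abs]
    ring
  simp_rw [hcol]
  rw [Finset.sum_add_distrib, ← Finset.mul_sum, ← aux_norm_sq_E32, ← aux_en_norm_sq]
lemma aux_le_of_sq {a b : ℝ} (ha : 0 ≤ a) (hb : 0 ≤ b) (h : a ^ 2 ≤ b ^ 2) : a ≤ b := by
  nlinarith

lemma aux_eq_of_sq {a b : ℝ} (ha : 0 ≤ a) (hb : 0 ≤ b) (h : a ^ 2 = b ^ 2) : a = b :=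
  le_antisymm (aux_le_of_sq ha hb h.le) (aux_le_of_sq hb ha h.ge)

lemma aux_lower {α r : ℝ} {s : E3} (hα : 0 < α) (hr : α ≤ r) (hs : ‖s‖ = 1)
    (η' : E32) (ξ' : E2) :
    α * ‖Pproj s η'‖ ≤ ‖r • Pproj s η' + tens s ξ'‖ := by
  have h := aux_orth_norm (r := r) hs (tang_Pproj hs η') ξ'
  have h1 : (0:ℝ) ≤ ‖Pproj s η'‖ := norm_nonneg _
  have h2 : (0:ℝ) ≤ ‖r • Pproj s η' + tens s ξ'‖ := norm_nonneg _
  refine aux_le_of_sq (by positivity) h2 ?_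
  rw [h, mul_pow]
  nlinarith [sq_nonneg ‖ξ'‖, sq_nonneg ‖Pproj s η'‖, mul_le_mul hr hr hα.le (hα.le.trans hr)]

lemma Pproj_norm_le {s : E3} (hs : ‖s‖ = 1) (m : E32) : ‖Pproj s m‖ ≤ 2 * ‖m‖ := by
  refine aux_le_of_sq (norm_nonneg _) (by positivity) ?_
  rw [mul_pow, aux_norm_sq_E32, aux_norm_sq_E32 m, Finset.mul_sum]
  refine Finset.sum_le_sum fun j _ => ?_
  have hb : ‖colv (Pproj s m) j‖ ≤ 2 * ‖colv m j‖ := by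
    rw [colv_Pproj]
    have h3 := abs_real_inner_le_norm s (colv m j)
    rw [hs, one_mul] at h3
    calc ‖colv m j - ⟪s, colv m j⟫ • s‖ ≤ ‖colv m j‖ + ‖⟪s, colv m j⟫ • s‖ := norm_sub_le _ _
      _ ≤ ‖colv m j‖ + ‖colv m j‖ := by
          rw [norm_smul, hs, mul_one, Real.norm_eq_abs]; linarith
      _ = 2 * ‖colv m j‖ := by ring
  calc ‖colv (Pproj s m) j‖ ^ 2 ≤ (2 * ‖colv m j‖) ^ 2 :=
        pow_le_pow_left₀ (norm_nonneg _) hb 2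
    _ = 2 ^ 2 * ‖colv m j‖ ^ 2 := by ring

def mapR (R : E3 ≃ₗᵢ[ℝ] E3) (m : E32) : E32 :=
  WithLp.toLp 2 (fun p : Fin 3 × Fin 2 => R (colv m p.2) p.1)

lemma colv_mapR (R : E3 ≃ₗᵢ[ℝ] E3) (m : E32) (j : Fin 2) :
    colv (mapR R m) j = R (colv m j) := rfl

lemma norm_mapR (R : E3 ≃ₗᵢ[ℝ] E3) (m : E32) : ‖mapR R m‖ = ‖m‖ := by
  refine aux_eq_of_sq (norm_nonneg _) (norm_nonneg _) ?_
  rw [aux_norm_sq_E32, aux_norm_sq_E32 m]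
  simp [colv_mapR]

lemma mapR_add (R : E3 ≃ₗᵢ[ℝ] E3) (a b : E32) :
    mapR R (a + b) = mapR R a + mapR R b := by
  apply colv_ext
  intro j
  simp [colv_mapR, colv_add]

lemma mapR_smul (R : E3 ≃ₗᵢ[ℝ] E3) (r : ℝ) (a : E32) :
    mapR R (r • a) = r • mapR R a := by
  apply colv_ext
  intro j
  simp [colv_mapR, colv_smul]

lemma mapR_sub (R : E3 ≃ₗᵢ[ℝ] E3) (a b : E32) :
    mapR R (a - b) = mapR R a - mapR R b := by
  have h : colv (a - b) = fun j => colv a j - colv b j := rfl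
  apply colv_ext
  intro j
  have : colv (mapR R a - mapR R b) j = colv (mapR R a) j - colv (mapR R b) j := rfl
  rw [this, colv_mapR, colv_mapR, colv_mapR]
  rw [show colv (a-b) j = colv a j - colv b j from rfl, map_sub]

lemma mapR_tens {R : E3 ≃ₗᵢ[ℝ] E3} {s sb : E3} (hRs : R s = sb) (ξ : E2) :
    mapR R (tens s ξ) = tens sb ξ := by
  apply colv_ext
  intro j
  rw [colv_mapR, colv_tens, colv_tens, _root_.map_smul, hRs]

lemma mapR_Pproj {R : E3 ≃ₗᵢ[ℝ] E3} {s sb : E3} (hRs : R s = sb) (m : E32) :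
    Pproj sb (mapR R m) = mapR R (Pproj s m) := by
  apply colv_ext
  intro j
  rw [colv_Pproj, colv_mapR, colv_mapR, colv_Pproj, _root_.map_sub, _root_.map_smul, ← hRs,
    LinearIsometryEquiv.inner_map_map]

lemma tang_mapR {R : E3 ≃ₗᵢ[ℝ] E3} {s sb : E3} (hRs : R s = sb) {m : E32}
    (hm : tang s m) : tang sb (mapR R m) := by
  intro j
  rw [colv_mapR, ← hRs, LinearIsometryEquiv.inner_map_map]
  exact hm j

lemma exists_rot (s sb : E3) (hs : ‖s‖ = 1) (hsb : ‖sb‖ = 1) :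
    ∃ R : E3 ≃ₗᵢ[ℝ] E3, R s = sb ∧
      ∀ v : E3, ⟪s, v⟫ = 0 → ‖R v - v‖ ≤ 2 * ‖s - sb‖ * ‖v‖ := by
  by_cases hw : s + sb = 0
  · have hsb' : sb = -s := eq_neg_of_add_eq_zero_right hw
    refine ⟨(Submodule.reflection (ℝ ∙ s)).trans (LinearIsometryEquiv.neg ℝ), ?_, ?_⟩
    · rw [LinearIsometryEquiv.trans_apply,
        Submodule.reflection_mem_subspace_eq_self (Submodule.mem_span_singleton_self s)]
      simp [hsb']
    · intro v hv
      rw [LinearIsometryEquiv.trans_apply,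
        Submodule.reflection_mem_subspace_orthogonalComplement_eq_neg
          (Submodule.mem_orthogonal_singleton_iff_inner_right.mpr hv)]
      simp
      positivity
  · have hWpos : (0:ℝ) < ‖s + sb‖ := norm_pos_iff.mpr hw
    have hW2 : ‖s + sb‖ ^ 2 = 2 + 2 * ⟪s, sb⟫ := by
      rw [norm_add_sq_real, hs, hsb]; ring
    have hD2 : ‖s - sb‖ ^ 2 = 2 - 2 * ⟪s, sb⟫ := by
      rw [norm_sub_sq_real, hs, hsb]; ring
    have hWD : ‖s + sb‖ ^ 2 + ‖s - sb‖ ^ 2 = 4 := by rw [hW2, hD2]; ring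
    refine ⟨(Submodule.reflection (ℝ ∙ s)).trans (Submodule.reflection (ℝ ∙ (s + sb))), ?_, ?_⟩
    · rw [LinearIsometryEquiv.trans_apply,
        Submodule.reflection_mem_subspace_eq_self (Submodule.mem_span_singleton_self s),
        Submodule.reflection_singleton_apply]
      simp only [RCLike.ofReal_real_eq_id, id_eq]
      have h0 : ‖s + sb‖ ≠ 0 := ne_of_gt hWpos
      have hinner : ⟪s + sb, s⟫ = ‖s + sb‖ ^ 2 / 2 := by
        rw [inner_add_left, real_inner_self_eq_norm_sq, hs, real_inner_comm, hW2]; ring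
      have hcoef : (⟪s + sb, s⟫ / ‖s + sb‖ ^ 2 : ℝ) = 1 / 2 := by
        rw [hinner]; field_simp
      rw [hcoef, two_smul]
      module
    · intro v hv
      have hrefl : Submodule.reflection (ℝ ∙ s) v = -v :=
        Submodule.reflection_mem_subspace_orthogonalComplement_eq_neg
          (Submodule.mem_orthogonal_singleton_iff_inner_right.mpr hv)
      have hRv : (Submodule.reflection (ℝ ∙ s)).trans (Submodule.reflection (ℝ ∙ (s + sb))) v - v
          = (-2 * (⟪s + sb, v⟫ / ‖s + sb‖ ^ 2)) • (s + sb) := by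
        rw [LinearIsometryEquiv.trans_apply, hrefl, Submodule.reflection_singleton_apply,
          inner_neg_right, two_smul]
        simp only [RCLike.ofReal_real_eq_id, id_eq]
        module
      have hIv : ⟪s + sb, v⟫ = ⟪sb - s, v⟫ := by
        rw [inner_add_left, inner_sub_left, hv]; ring
      have h1 : |⟪s + sb, v⟫| ≤ ‖s - sb‖ * ‖v‖ := by
        rw [hIv, ← norm_neg (s - sb), neg_sub]
        exact abs_real_inner_le_norm _ _
      have h2 : |⟪s + sb, v⟫| ≤ ‖s + sb‖ * ‖v‖ := abs_real_inner_le_norm _ _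
      have key : |⟪s + sb, v⟫| ≤ ‖s - sb‖ * ‖v‖ * ‖s + sb‖ := by
        rcases le_or_gt 1 ‖s - sb‖ with hD | hD
        · nlinarith [mul_nonneg (mul_nonneg (sub_nonneg.mpr hD) (norm_nonneg (s + sb)))
            (norm_nonneg v), h2]
        · have hW1 : (1:ℝ) ≤ ‖s + sb‖ := by nlinarith [norm_nonneg (s - sb), norm_nonneg (s + sb)]
          nlinarith [mul_nonneg (mul_nonneg (sub_nonneg.mpr hW1) (norm_nonneg (s - sb)))
            (norm_nonneg v), h1]
      rw [hRv, norm_smul, Real.norm_eq_abs]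
      have habs : |(-2 : ℝ) * (⟪s + sb, v⟫ / ‖s + sb‖ ^ 2)|
          = 2 * |⟪s + sb, v⟫| / ‖s + sb‖ ^ 2 := by
        rw [abs_mul, abs_div, abs_neg, abs_two, abs_of_pos (by positivity : (0:ℝ) < ‖s + sb‖ ^ 2)]
        ring
      rw [habs]
      rw [div_mul_eq_mul_div, div_le_iff₀ (by positivity)]
      nlinarith [mul_le_mul_of_nonneg_left key (by positivity : (0:ℝ) ≤ 2 * ‖s + sb‖)]

lemma tens_add (s : E3) (a b : E2) : tens s a + tens s b = tens s (a + b) := by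
  apply colv_ext
  intro j
  rw [colv_add, colv_tens, colv_tens, colv_tens]
  have : (a + b) j = a j + b j := rfl
  rw [this, add_smul]

lemma norm_sub_mapR {R : E3 ≃ₗᵢ[ℝ] E3} {s sb : E3}
    (hRI : ∀ v : E3, ⟪s, v⟫ = 0 → ‖R v - v‖ ≤ 2 * ‖s - sb‖ * ‖v‖)
    {η : E32} (hη : tang s η) : ‖mapR R η - η‖ ≤ 2 * ‖s - sb‖ * ‖η‖ := by
  refine aux_le_of_sq (norm_nonneg _) (by positivity) ?_
  rw [aux_norm_sq_E32, mul_pow, mul_pow, aux_norm_sq_E32 η, Finset.mul_sum]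
  refine Finset.sum_le_sum fun j _ => ?_
  have h1 : colv (mapR R η - η) j = R (colv η j) - colv η j := by
    have : colv (mapR R η - η) j = colv (mapR R η) j - colv η j := rfl
    rw [this, colv_mapR]
  rw [h1]
  have h2 := hRI (colv η j) (hη j)
  calc ‖R (colv η j) - colv η j‖ ^ 2 ≤ (2 * ‖s - sb‖ * ‖colv η j‖) ^ 2 := by
        apply pow_le_pow_left₀ (norm_nonneg _) h2
    _ = 2 ^ 2 * ‖s - sb‖ ^ 2 * ‖colv η j‖ ^ 2 := by ring

lemma Fdens_nonneg {g : ℝ → ℝ} (hg : ∀ t : ℝ, 0 ≤ t → 0 < g t ∧ g t ≤ 1)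
    (r : ℝ) (s : E3) (ξ : E2) (η : E32) : 0 ≤ Fdens g r s ξ η := by
  have h1 := (hg ‖ξ‖ (norm_nonneg _)).1
  have h2 : (0:ℝ) ≤ ‖Pproj s η‖ := norm_nonneg _
  have h3 : (0:ℝ) ≤ ‖r • Pproj s η + tens s ξ‖ := norm_nonneg _
  have h4 : (0:ℝ) ≤ ‖ξ‖ := norm_nonneg _
  unfold Fdens
  nlinarith

lemma Fdens_le {g : ℝ → ℝ} (hg : ∀ t : ℝ, 0 ≤ t → 0 < g t ∧ g t ≤ 1)
    {β r : ℝ} (hr0 : 0 ≤ r) (hrβ : r ≤ β) {s : E3} (hs : ‖s‖ = 1) (ξ : E2) (η : E32) :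
    Fdens g r s ξ η ≤ 2 * ‖ξ‖ + (2 + 2 * β) * ‖η‖ := by
  have hP := Pproj_norm_le hs η
  have hg1 := (hg ‖ξ‖ (norm_nonneg _)).1
  have hg2 := (hg ‖ξ‖ (norm_nonneg _)).2
  have h3 : ‖r • Pproj s η + tens s ξ‖ ≤ r * ‖Pproj s η‖ + ‖ξ‖ := by
    calc ‖r • Pproj s η + tens s ξ‖ ≤ ‖r • Pproj s η‖ + ‖tens s ξ‖ := norm_add_le _ _
      _ = r * ‖Pproj s η‖ + ‖ξ‖ := by
          rw [norm_smul, Real.norm_eq_abs, abs_of_nonneg hr0, norm_tens hs]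
  have h2 : g ‖ξ‖ * ‖Pproj s η‖ ≤ ‖Pproj s η‖ := by
    nlinarith [norm_nonneg (Pproj s η)]
  have h4 : r * ‖Pproj s η‖ ≤ β * (2 * ‖η‖) := by
    have := mul_le_mul hrβ hP (norm_nonneg _) (hr0.trans hrβ)
    linarith
  unfold Fdens
  nlinarith [norm_nonneg η, norm_nonneg ξ]

lemma Fdens_lower {g : ℝ → ℝ} (hg : ∀ t : ℝ, 0 ≤ t → 0 < g t ∧ g t ≤ 1)
    {α r : ℝ} (hα : 0 < α) (hr : α ≤ r) {s : E3} (hs : ‖s‖ = 1) (ξ : E2) (η : E32) :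
    α * ‖Pproj s η‖ ≤ Fdens g r s ξ η := by
  have h1 := aux_lower hα hr hs η ξ
  have hg1 := (hg ‖ξ‖ (norm_nonneg _)).1
  have h2 : (0:ℝ) ≤ g ‖ξ‖ * ‖Pproj s η‖ := by positivity
  have h4 : (0:ℝ) ≤ ‖ξ‖ := norm_nonneg _
  unfold Fdens
  linarith

lemma key_pointwise {g : ℝ → ℝ} (hg : ∀ t : ℝ, 0 ≤ t → 0 < g t ∧ g t ≤ 1)
    {Kg : NNReal} (hgl : LipschitzOnWith Kg g (Set.Ici 0))
    {α β r rb : ℝ} (hα : 0 < α) (hr : r ∈ Set.Icc α β) (hrb : rb ∈ Set.Icc α β)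
    {s sb : E3} (hs : ‖s‖ = 1) (hsb : ‖sb‖ = 1) {R : E3 ≃ₗᵢ[ℝ] E3} (hRs : R s = sb)
    {η ηb : E32} (hη : tang s η) (hηb : tang sb ηb)
    (ξ ξb L : E2) (ζ : E32) :
    Fdens g rb sb (ξb + L) (ηb + mapR R ζ) ≤ Fdens g r s (ξ + L) (η + ζ)
      + (2 + β) * ‖ηb - mapR R η‖ + 2 * ‖ξ - ξb‖
      + (Kg * ‖ξ - ξb‖ + |r - rb|) * ‖Pproj s (η + ζ)‖ := by
  set p := Pproj s (η + ζ) with hp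
  set q := Pproj sb (ηb + mapR R ζ) with hq0
  set e := ηb - mapR R η with he
  -- structure of q
  have hpe : p = η + Pproj s ζ := by
    rw [hp, Pproj_add, Pproj_eq_self hη]
  have hq : q = e + mapR R p := by
    rw [hq0, Pproj_add, Pproj_eq_self hηb, mapR_Pproj hRs, he, hpe, mapR_add]
    abel
  have hnormq : ‖q‖ ≤ ‖p‖ + ‖e‖ := by
    rw [hq]
    have h := norm_add_le e (mapR R p)
    rw [norm_mapR] at h
    linarith
  have hd : ‖(ξb + L : E2) - (ξ + L)‖ = ‖ξ - ξb‖ := by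
    have h1 : (ξb + L : E2) - (ξ + L) = -(ξ - ξb) := by module
    rw [h1, norm_neg]
  -- Term 1
  have hT1 : ‖(ξb + L : E2)‖ ≤ ‖(ξ + L : E2)‖ + ‖ξ - ξb‖ := by
    have h1 : (ξb + L : E2) = (ξ + L) - (ξ - ξb) := by module
    rw [h1]
    exact norm_sub_le _ _
  -- g facts
  have hga := hg ‖(ξ + L : E2)‖ (norm_nonneg _)
  have hgb := hg ‖(ξb + L : E2)‖ (norm_nonneg _)
  have hglip : |g ‖(ξb + L : E2)‖ - g ‖(ξ + L : E2)‖| ≤ Kg * ‖ξ - ξb‖ := by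
    have h1 := (lipschitzOnWith_iff_dist_le_mul.mp hgl) ‖(ξb + L : E2)‖
      (Set.mem_Ici.mpr (norm_nonneg _)) ‖(ξ + L : E2)‖ (Set.mem_Ici.mpr (norm_nonneg _))
    rw [Real.dist_eq, Real.dist_eq] at h1
    refine h1.trans ?_
    have h2 : |‖(ξb + L : E2)‖ - ‖(ξ + L : E2)‖| ≤ ‖ξ - ξb‖ := by
      have := abs_norm_sub_norm_le (ξb + L : E2) (ξ + L)
      rw [hd] at this
      exact this
    exact mul_le_mul_of_nonneg_left h2 Kg.coe_nonneg
  -- Term 2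
  have hT2 : g ‖(ξb + L : E2)‖ * ‖q‖ ≤ g ‖(ξ + L : E2)‖ * ‖p‖ + Kg * ‖ξ - ξb‖ * ‖p‖ + ‖e‖ := by
    have h1 : g ‖(ξb + L : E2)‖ * ‖q‖ ≤ g ‖(ξb + L : E2)‖ * (‖p‖ + ‖e‖) :=
      mul_le_mul_of_nonneg_left hnormq hgb.1.le
    have h2 : g ‖(ξb + L : E2)‖ * ‖e‖ ≤ ‖e‖ := by
      nlinarith [norm_nonneg e, hgb.1, hgb.2]
    have h3 : g ‖(ξb + L : E2)‖ * ‖p‖ - g ‖(ξ + L : E2)‖ * ‖p‖ ≤ Kg * ‖ξ - ξb‖ * ‖p‖ := by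
      have h4 : g ‖(ξb + L : E2)‖ - g ‖(ξ + L : E2)‖ ≤ Kg * ‖ξ - ξb‖ :=
        (le_abs_self _).trans hglip
      nlinarith [norm_nonneg p]
    nlinarith [norm_nonneg p]
  -- Term 3
  have hT3 : ‖rb • q + tens sb (ξb + L)‖ ≤ ‖r • p + tens s (ξ + L)‖
      + |r - rb| * ‖p‖ + β * ‖e‖ + ‖ξ - ξb‖ := by
    have h6 : tens sb (ξb + L) = mapR R (tens s (ξ + L)) + tens sb (ξb - ξ) := by
      have h7 : (ξb + L : E2) = (ξ + L) + (ξb - ξ) := by module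
      rw [h7, ← tens_add sb (ξ + L) (ξb - ξ), ← mapR_tens hRs (ξ + L)]
    have hX : rb • q + tens sb (ξb + L)
        = mapR R ((rb - r) • p + (r • p + tens s (ξ + L))) + (rb • e + tens sb (ξb - ξ)) := by
      rw [hq, h6, mapR_add R ((rb - r) • p) (r • p + tens s (ξ + L)),
        mapR_add R (r • p) (tens s (ξ + L)), mapR_smul R (rb - r) p, mapR_smul R r p]
      module
    rw [hX]
    have h1 : ‖mapR R ((rb - r) • p + (r • p + tens s (ξ + L))) + (rb • e + tens sb (ξb - ξ))‖
        ≤ ‖mapR R ((rb - r) • p + (r • p + tens s (ξ + L)))‖ + ‖rb • e‖ + ‖tens sb (ξb - ξ)‖ := by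
      calc _ ≤ ‖mapR R ((rb - r) • p + (r • p + tens s (ξ + L)))‖ + ‖rb • e + tens sb (ξb - ξ)‖ :=
            norm_add_le _ _
        _ ≤ _ := by
            have := norm_add_le (rb • e) (tens sb (ξb - ξ))
            linarith
    have h2 : ‖mapR R ((rb - r) • p + (r • p + tens s (ξ + L)))‖
        ≤ |r - rb| * ‖p‖ + ‖r • p + tens s (ξ + L)‖ := by
      rw [norm_mapR]
      have := norm_add_le ((rb - r) • p) (r • p + tens s (ξ + L))
      rw [norm_smul, Real.norm_eq_abs, abs_sub_comm] at this
      linarith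
    have h3 : ‖rb • e‖ ≤ β * ‖e‖ := by
      rw [norm_smul, Real.norm_eq_abs, abs_of_nonneg (hα.le.trans hrb.1)]
      exact mul_le_mul_of_nonneg_right hrb.2 (norm_nonneg _)
    have h4 : ‖tens sb (ξb - ξ)‖ = ‖ξ - ξb‖ := by
      rw [norm_tens hsb, ← norm_neg (ξb - ξ : E2)]
      congr 1
      module
    rw [h4] at h1
    linarith
  -- combine
  have hnp : (0:ℝ) ≤ ‖p‖ := norm_nonneg _
  have hne : (0:ℝ) ≤ ‖e‖ := norm_nonneg _
  unfold Fdens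
  linarith

lemma cubeQ_measurable : MeasurableSet cubeQ := by
  have h : cubeQ = ⋂ j, (fun y : E2 => y j) ⁻¹' (Set.Ioo (-(1/2) : ℝ) (1/2)) := by
    ext y; simp [cubeQ, Set.mem_iInter, Set.mem_preimage]
  rw [h]
  exact MeasurableSet.iInter fun j =>
    ((EuclideanSpace.proj j : E2 →L[ℝ] ℝ).continuous.measurable) measurableSet_Ioo

lemma cubeQ_vol_fin : volume cubeQ < ⊤ := by
  have hsub : cubeQ ⊆ Metric.ball (0 : E2) 3 := by
    intro y hy
    rw [Metric.mem_ball, dist_zero_right]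
    have h2 : ‖y‖ ≤ 2 := by
      refine aux_le_of_sq (norm_nonneg _) (by norm_num) ?_
      rw [aux_en_norm_sq]
      have hj : ∀ j : Fin 2, y j ^ 2 ≤ 2 := by
        intro j
        have := hy j
        rw [Set.mem_Ioo] at this
        nlinarith [this.1, this.2]
      calc ∑ j, y j ^ 2 ≤ ∑ _j : Fin 2, (2:ℝ) := Finset.sum_le_sum fun j _ => hj j
        _ = 4 := by simp; norm_num
        _ = 2 ^ 2 := by norm_num
    linarith
  exact lt_of_le_of_lt (measure_mono hsub) measure_ball_lt_top

lemma gradv_zero (y : E2) : gradv (fun _ => (0:ℝ)) y = 0 := by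
  ext j
  simp [gradv]

lemma gradm_zero (y : E2) : gradm (fun _ => (0:E3)) y = 0 := by
  ext p
  simp [gradm]

lemma gradv_bound {K : NNReal} {φ : E2 → ℝ} (hφ : LipschitzWith K φ) (y : E2) :
    ‖gradv φ y‖ ≤ Real.sqrt 2 * K := by
  have hK : (0:ℝ) ≤ (K:ℝ) := K.coe_nonneg
  refine aux_le_of_sq (norm_nonneg _) (by positivity) ?_
  rw [aux_en_norm_sq, mul_pow, Real.sq_sqrt (by norm_num : (0:ℝ) ≤ 2)]
  have hj : ∀ j : Fin 2, (gradv φ y j) ^ 2 ≤ (K:ℝ) ^ 2 := by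
    intro j
    have h1 : |gradv φ y j| ≤ (K:ℝ) := by
      have h2 : ‖fderiv ℝ φ y (EuclideanSpace.single j 1)‖
          ≤ ‖fderiv ℝ φ y‖ * ‖EuclideanSpace.single j (1:ℝ)‖ :=
        ContinuousLinearMap.le_opNorm _ _
      rw [EuclideanSpace.norm_single, norm_one, mul_one] at h2
      have h3 := norm_fderiv_le_of_lipschitz ℝ hφ (x₀ := y)
      simp only [gradv, Real.norm_eq_abs, PiLp.toLp_apply] at h2 ⊢
      linarith
    nlinarith [abs_nonneg (gradv φ y j), sq_abs (gradv φ y j)]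
  calc ∑ j, gradv φ y j ^ 2 ≤ ∑ _j : Fin 2, (K:ℝ)^2 := Finset.sum_le_sum fun j _ => hj j
    _ = 2 * (K:ℝ)^2 := by
        rw [Finset.sum_const]
        simp [two_mul]

lemma colv_gradm (ψ : E2 → E3) (y : E2) (j : Fin 2) :
    colv (gradm ψ y) j = fderiv ℝ ψ y (EuclideanSpace.single j 1) := rfl

lemma gradm_bound {K : NNReal} {ψ : E2 → E3} (hψ : LipschitzWith K ψ) (y : E2) :
    ‖gradm ψ y‖ ≤ Real.sqrt 2 * K := by
  have hK : (0:ℝ) ≤ (K:ℝ) := K.coe_nonneg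
  refine aux_le_of_sq (norm_nonneg _) (by positivity) ?_
  rw [aux_norm_sq_E32, mul_pow, Real.sq_sqrt (by norm_num : (0:ℝ) ≤ 2)]
  have hj : ∀ j : Fin 2, ‖colv (gradm ψ y) j‖ ^ 2 ≤ (K:ℝ) ^ 2 := by
    intro j
    rw [colv_gradm]
    have h2 : ‖fderiv ℝ ψ y (EuclideanSpace.single j 1)‖
        ≤ ‖fderiv ℝ ψ y‖ * ‖EuclideanSpace.single j (1:ℝ)‖ :=
      ContinuousLinearMap.le_opNorm _ _
    rw [EuclideanSpace.norm_single, norm_one, mul_one] at h2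
    have h3 := norm_fderiv_le_of_lipschitz ℝ hψ (x₀ := y)
    have h4 : ‖fderiv ℝ ψ y (EuclideanSpace.single j 1)‖ ≤ (K:ℝ) := h2.trans h3
    nlinarith [norm_nonneg (fderiv ℝ ψ y (EuclideanSpace.single j 1))]
  calc ∑ j, ‖colv (gradm ψ y) j‖ ^ 2 ≤ ∑ _j : Fin 2, (K:ℝ)^2 :=
        Finset.sum_le_sum fun j _ => hj j
    _ = 2 * (K:ℝ)^2 := by
        rw [Finset.sum_const]
        simp [two_mul]

lemma gradm_comp_isometry (R : E3 ≃ₗᵢ[ℝ] E3) (ψ : E2 → E3) (y : E2) :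
    gradm (fun x => R (ψ x)) y = mapR R (gradm ψ y) := by
  have hfd : fderiv ℝ (fun x => R (ψ x)) y
      = (R.toContinuousLinearEquiv : E3 →L[ℝ] E3).comp (fderiv ℝ ψ y) := by
    have h1 : (fun x => R (ψ x)) = (R.toContinuousLinearEquiv : E3 → E3) ∘ ψ := rfl
    rw [h1, ContinuousLinearEquiv.comp_fderiv]
  ext p
  show (fderiv ℝ (fun x => R (ψ x)) y) (EuclideanSpace.single p.2 1) p.1 = _
  rw [hfd]
  rfl

lemma cont_eval32 (p : Fin 3 × Fin 2) : Continuous fun u : E32 => u p :=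
  (EuclideanSpace.proj p : E32 →L[ℝ] ℝ).continuous

lemma cont_eval2 (j : Fin 2) : Continuous fun u : E2 => u j :=
  (EuclideanSpace.proj j : E2 →L[ℝ] ℝ).continuous

lemma meas_gradv (φ : E2 → ℝ) : Measurable (gradv φ) := by
  have h : gradv φ = fun y => (EuclideanSpace.equiv (Fin 2) ℝ).symm
      (fun j => fderiv ℝ φ y (EuclideanSpace.single j 1)) := rfl
  rw [h]
  exact ((EuclideanSpace.equiv (Fin 2) ℝ).symm.continuous.measurable).comp
    (measurable_pi_lambda _ fun j => measurable_fderiv_apply_const ℝ φ _)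

lemma cont_eval3 (i : Fin 3) : Continuous fun u : E3 => u i :=
  (EuclideanSpace.proj i : E3 →L[ℝ] ℝ).continuous

lemma meas_gradm (ψ : E2 → E3) : Measurable (gradm ψ) := by
  have h : gradm ψ = fun y => (EuclideanSpace.equiv (Fin 3 × Fin 2) ℝ).symm
      (fun p => fderiv ℝ ψ y (EuclideanSpace.single p.2 1) p.1) := rfl
  rw [h]
  refine ((EuclideanSpace.equiv (Fin 3 × Fin 2) ℝ).symm.continuous.measurable).comp
    (measurable_pi_lambda _ fun p => ?_)
  exact (cont_eval3 p.1).measurable.comp (measurable_fderiv_apply_const ℝ ψ _)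

lemma cont_Pproj (s : E3) : Continuous fun u : E32 => Pproj s u := by
  have h : (fun u : E32 => Pproj s u) = fun u =>
      (EuclideanSpace.equiv (Fin 3 × Fin 2) ℝ).symm
        (fun p => u p - s p.1 * ∑ i, s i * u (i, p.2)) := rfl
  rw [h]
  refine (EuclideanSpace.equiv _ ℝ).symm.continuous.comp (continuous_pi fun p => ?_)
  exact (cont_eval32 p).sub (continuous_const.mul
    (continuous_finset_sum _ fun i _ => continuous_const.mul (cont_eval32 (i, p.2))))

lemma cont_tens (s : E3) : Continuous fun u : E2 => tens s u := by
  have h : (fun u : E2 => tens s u) = fun u =>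
      (EuclideanSpace.equiv (Fin 3 × Fin 2) ℝ).symm (fun p => s p.1 * u p.2) := rfl
  rw [h]
  refine (EuclideanSpace.equiv _ ℝ).symm.continuous.comp (continuous_pi fun p => ?_)
  exact continuous_const.mul (cont_eval2 p.2)

lemma lipschitz_Gmax {Kg : NNReal} {g : ℝ → ℝ} (hgl : LipschitzOnWith Kg g (Set.Ici 0)) :
    LipschitzWith Kg (fun t => g (max t 0)) := by
  rw [lipschitzWith_iff_dist_le_mul]
  intro x y
  have h1 := lipschitzOnWith_iff_dist_le_mul.mp hgl (max x 0)
    (Set.mem_Ici.mpr (le_max_right x 0)) (max y 0) (Set.mem_Ici.mpr (le_max_right y 0))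
  have h2 : |max x 0 - max y 0| ≤ |x - y| := abs_max_sub_max_le_abs x y 0
  rw [Real.dist_eq] at h1 ⊢
  rw [Real.dist_eq] at h1
  calc |g (max x 0) - g (max y 0)| ≤ Kg * |max x 0 - max y 0| := h1
    _ ≤ Kg * |x - y| := mul_le_mul_of_nonneg_left h2 Kg.coe_nonneg

lemma integrand_measurable {g : ℝ → ℝ} {Kg : NNReal} (hgl : LipschitzOnWith Kg g (Set.Ici 0))
    (r : ℝ) (s : E3) (ξ : E2) (η : E32) (φ : E2 → ℝ) (ψ : E2 → E3) :
    Measurable (fun y => Fdens g r s (ξ + gradv φ y) (η + gradm ψ y)) := by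
  have mξ : Measurable fun y => (ξ + gradv φ y : E2) := (meas_gradv φ).const_add ξ
  have mη : Measurable fun y => (η + gradm ψ y : E32) := (meas_gradm ψ).const_add η
  have mP : Measurable fun y => Pproj s (η + gradm ψ y) := (cont_Pproj s).measurable.comp mη
  have mnP : Measurable fun y => ‖Pproj s (η + gradm ψ y)‖ := continuous_norm.measurable.comp mP
  have mnξ : Measurable fun y => ‖(ξ + gradv φ y : E2)‖ := continuous_norm.measurable.comp mξ
  have mG : Measurable fun y => g (max ‖(ξ + gradv φ y : E2)‖ 0) :=
    ((lipschitz_Gmax hgl).continuous.measurable).comp mnξ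
  have m3 : Measurable fun y =>
      ‖r • Pproj s (η + gradm ψ y) + tens s (ξ + gradv φ y)‖ := by
    refine continuous_norm.measurable.comp (Measurable.add ?_ ?_)
    · exact (continuous_const_smul r).measurable.comp mP
    · exact (cont_tens s).measurable.comp mξ
  have h : (fun y => Fdens g r s (ξ + gradv φ y) (η + gradm ψ y))
      = fun y => ‖(ξ + gradv φ y : E2)‖
        + g (max ‖(ξ + gradv φ y : E2)‖ 0) * ‖Pproj s (η + gradm ψ y)‖
        + ‖r • Pproj s (η + gradm ψ y) + tens s (ξ + gradv φ y)‖ := by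
    funext y
    rw [max_eq_left (norm_nonneg _)]
    rfl
  rw [h]
  exact (mnξ.add (mG.mul mnP)).add m3

lemma integrand_integrable {g : ℝ → ℝ} (hg : ∀ t : ℝ, 0 ≤ t → 0 < g t ∧ g t ≤ 1)
    {Kg : NNReal} (hgl : LipschitzOnWith Kg g (Set.Ici 0))
    {β r : ℝ} (hr0 : 0 ≤ r) (hrβ : r ≤ β) {s : E3} (hs : ‖s‖ = 1) (ξ : E2) (η : E32)
    {K1 K2 : NNReal} {φ : E2 → ℝ} {ψ : E2 → E3}
    (hφ : LipschitzWith K1 φ) (hψ : LipschitzWith K2 ψ) :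
    IntegrableOn (fun y => Fdens g r s (ξ + gradv φ y) (η + gradm ψ y)) cubeQ volume ∧
    IntegrableOn (fun y => ‖Pproj s (η + gradm ψ y)‖) cubeQ volume := by
  set C1 : ℝ := ‖ξ‖ + Real.sqrt 2 * K1 with hC1
  set C2 : ℝ := ‖η‖ + Real.sqrt 2 * K2 with hC2
  have hbξ : ∀ y, ‖(ξ + gradv φ y : E2)‖ ≤ C1 := fun y =>
    (norm_add_le _ _).trans (by have := gradv_bound hφ y; rw [hC1]; linarith)
  have hbη : ∀ y, ‖(η + gradm ψ y : E32)‖ ≤ C2 := fun y =>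
    (norm_add_le _ _).trans (by have := gradm_bound hψ y; rw [hC2]; linarith)
  have hbP : ∀ y, ‖Pproj s (η + gradm ψ y)‖ ≤ 2 * C2 := fun y =>
    (Pproj_norm_le hs _).trans (by have := hbη y; nlinarith [norm_nonneg (η + gradm ψ y : E32)])
  constructor
  · have hconst : IntegrableOn (fun _ : E2 => 2 * C1 + (2 + 2 * β) * C2) cubeQ volume :=
      integrableOn_const (lt_top_iff_ne_top.mp cubeQ_vol_fin)
    refine Integrable.mono' hconst
      ((integrand_measurable hgl r s ξ η φ ψ).aestronglyMeasurable) (ae_of_all _ fun y => ?_)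
    have h1 := Fdens_le hg hr0 hrβ hs (ξ + gradv φ y) (η + gradm ψ y)
    have h2 := Fdens_nonneg hg r s (ξ + gradv φ y) (η + gradm ψ y)
    rw [Real.norm_eq_abs, abs_of_nonneg h2]
    have h3 := hbξ y
    have h4 := hbη y
    have hβ : (0:ℝ) ≤ β := hr0.trans hrβ
    nlinarith [norm_nonneg (ξ + gradv φ y : E2), norm_nonneg (η + gradm ψ y : E32)]
  · have hconst : IntegrableOn (fun _ : E2 => 2 * C2) cubeQ volume :=
      integrableOn_const (lt_top_iff_ne_top.mp cubeQ_vol_fin)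
    have mη : Measurable fun y => (η + gradm ψ y : E32) := (meas_gradm ψ).const_add η
    have mnP : Measurable fun y => ‖Pproj s (η + gradm ψ y)‖ :=
      continuous_norm.measurable.comp ((cont_Pproj s).measurable.comp mη)
    refine Integrable.mono' hconst mnP.aestronglyMeasurable (ae_of_all _ fun y => ?_)
    rw [Real.norm_eq_abs, abs_of_nonneg (norm_nonneg _)]
    exact hbP y

def QFset (g : ℝ → ℝ) (r : ℝ) (s : E3) (ξ : E2) (η : E32) : Set ℝ :=
  {v : ℝ | ∃ φ : E2 → ℝ, ∃ ψ : E2 → E3,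
    (∃ K : NNReal, LipschitzWith K φ) ∧ (∃ K : NNReal, LipschitzWith K ψ) ∧
    (∀ y ∉ cubeQ, φ y = 0) ∧ (∀ y ∉ cubeQ, ψ y = 0) ∧
    v = ∫ y in cubeQ, Fdens g r s (ξ + gradv φ y) (η + gradm ψ y)}

lemma QFset_nonneg {g : ℝ → ℝ} (hg : ∀ t : ℝ, 0 ≤ t → 0 < g t ∧ g t ≤ 1)
    (r : ℝ) (s : E3) (ξ : E2) (η : E32) : ∀ v ∈ QFset g r s ξ η, 0 ≤ v := by
  rintro v ⟨φ, ψ, _, _, _, _, rfl⟩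
  exact setIntegral_nonneg cubeQ_measurable fun y _ => Fdens_nonneg hg _ _ _ _

lemma QFset_bddBelow {g : ℝ → ℝ} (hg : ∀ t : ℝ, 0 ≤ t → 0 < g t ∧ g t ≤ 1)
    (r : ℝ) (s : E3) (ξ : E2) (η : E32) : BddBelow (QFset g r s ξ η) :=
  ⟨0, fun v hv => QFset_nonneg hg r s ξ η v hv⟩

lemma QFset_mem_zero (g : ℝ → ℝ) (r : ℝ) (s : E3) (ξ : E2) (η : E32) :
    (volume cubeQ).toReal * Fdens g r s ξ η ∈ QFset g r s ξ η := by
  refine ⟨fun _ => 0, fun _ => 0, ⟨0, LipschitzWith.const' 0⟩, ⟨0, LipschitzWith.const' 0⟩,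
    fun _ _ => rfl, fun _ _ => rfl, ?_⟩
  have h : (fun y : E2 => Fdens g r s (ξ + gradv (fun _ => (0:ℝ)) y)
      (η + gradm (fun _ => (0:E3)) y)) = fun _ => Fdens g r s ξ η := by
    funext y
    rw [gradv_zero, gradm_zero, add_zero, add_zero]
  rw [h, setIntegral_const, smul_eq_mul, measureReal_def]

lemma QFset_nonempty (g : ℝ → ℝ) (r : ℝ) (s : E3) (ξ : E2) (η : E32) :
    (QFset g r s ξ η).Nonempty :=
  ⟨_, QFset_mem_zero g r s ξ η⟩

lemma sInf_QFset_nonneg {g : ℝ → ℝ} (hg : ∀ t : ℝ, 0 ≤ t → 0 < g t ∧ g t ≤ 1)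
    (r : ℝ) (s : E3) (ξ : E2) (η : E32) : 0 ≤ sInf (QFset g r s ξ η) :=
  le_csInf (QFset_nonempty g r s ξ η) (QFset_nonneg hg r s ξ η)

lemma sInf_QFset_le {g : ℝ → ℝ} (hg : ∀ t : ℝ, 0 ≤ t → 0 < g t ∧ g t ≤ 1)
    (r : ℝ) (s : E3) (ξ : E2) (η : E32) :
    sInf (QFset g r s ξ η) ≤ (volume cubeQ).toReal * Fdens g r s ξ η :=
  csInf_le (QFset_bddBelow hg r s ξ η) (QFset_mem_zero g r s ξ η)

lemma QF_diff_half {g : ℝ → ℝ} (hg : ∀ t : ℝ, 0 ≤ t → 0 < g t ∧ g t ≤ 1)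
    {Kg : NNReal} (hgl : LipschitzOnWith Kg g (Set.Ici 0))
    {α β r rb : ℝ} (hα : 0 < α) (hr : r ∈ Set.Icc α β) (hrb : rb ∈ Set.Icc α β)
    {s sb : E3} (hs : ‖s‖ = 1) (hsb : ‖sb‖ = 1) (ξ ξb : E2) {η ηb : E32}
    (hη : tang s η) (hηb : tang sb ηb) :
    sInf (QFset g rb sb ξb ηb) ≤ sInf (QFset g r s ξ η)
      + sInf (QFset g r s ξ η) * ((Kg * ‖ξ - ξb‖ + |r - rb|) / α)
      + ((2 + β) * (‖η - ηb‖ + 2 * ‖s - sb‖ * ‖η‖) + 2 * ‖ξ - ξb‖)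
        * (volume cubeQ).toReal := by
  obtain ⟨R, hRs, hRI⟩ := exists_rot s sb hs hsb
  set V : ℝ := (volume cubeQ).toReal with hV
  have hV0 : 0 ≤ V := ENNReal.toReal_nonneg
  set B : ℝ := Kg * ‖ξ - ξb‖ + |r - rb| with hBdef
  have hB0 : 0 ≤ B := by positivity
  set A : ℝ := (2 + β) * (‖η - ηb‖ + 2 * ‖s - sb‖ * ‖η‖) + 2 * ‖ξ - ξb‖ with hAdef
  have hβ0 : (0:ℝ) < β := hα.trans_le (hr.1.trans hr.2)
  have hA0 : 0 ≤ A := by positivity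
  have hQa0 : 0 ≤ sInf (QFset g r s ξ η) := sInf_QFset_nonneg hg r s ξ η
  refine le_of_forall_pos_le_add fun ε hε => ?_
  set D : ℝ := 1 + B / α with hDdef
  have hD : 0 < D := by positivity
  set ε' : ℝ := ε / D with hε'def
  have hε' : 0 < ε' := by positivity
  have hee : ε' * D = ε := div_mul_cancel₀ ε hD.ne'
  obtain ⟨v, hvmem, hvlt⟩ := Real.lt_sInf_add_pos (QFset_nonempty g r s ξ η) hε'
  obtain ⟨φ, ψ, ⟨K1, hφ⟩, ⟨K2, hψ⟩, hφ0, hψ0, hveq⟩ := hvmem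
  -- the competitor for the b-data
  have hwmem : (∫ y in cubeQ, Fdens g rb sb (ξb + gradv φ y)
      (ηb + gradm (fun x => R (ψ x)) y)) ∈ QFset g rb sb ξb ηb := by
    refine ⟨φ, fun x => R (ψ x), ⟨K1, hφ⟩, ⟨1 * K2, R.lipschitz.comp hψ⟩, hφ0,
      fun y hy => ?_, rfl⟩
    show R (ψ y) = 0
    rw [hψ0 y hy, map_zero]
  have hQFb_le := csInf_le (QFset_bddBelow hg rb sb ξb ηb) hwmem
  -- pointwise comparison
  have hpt : ∀ y, Fdens g rb sb (ξb + gradv φ y) (ηb + gradm (fun x => R (ψ x)) y)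
      ≤ Fdens g r s (ξ + gradv φ y) (η + gradm ψ y) + A
        + B * ‖Pproj s (η + gradm ψ y)‖ := by
    intro y
    rw [gradm_comp_isometry]
    have h1 := key_pointwise hg hgl hα hr hrb hs hsb hRs hη hηb ξ ξb (gradv φ y) (gradm ψ y)
    have he : ‖ηb - mapR R η‖ ≤ ‖η - ηb‖ + 2 * ‖s - sb‖ * ‖η‖ := by
      have h2 : ηb - mapR R η = (ηb - η) - (mapR R η - η) := by module
      rw [h2]
      have h3 := norm_sub_le (ηb - η) (mapR R η - η)
      have h4 := norm_sub_mapR hRI hη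
      have h5 : ‖ηb - η‖ = ‖η - ηb‖ := norm_sub_rev _ _
      linarith
    have h6 := mul_le_mul_of_nonneg_left he (by linarith : (0:ℝ) ≤ 2 + β)
    rw [hAdef, hBdef]
    linarith
  -- integrability
  obtain ⟨ifa, iP⟩ := integrand_integrable hg hgl (hα.le.trans hr.1) hr.2 hs ξ η hφ hψ
  have iconst : IntegrableOn (fun _ : E2 => A) cubeQ volume :=
    integrableOn_const (lt_top_iff_ne_top.mp cubeQ_vol_fin)
  -- ∫ P ≤ (1/α) v
  have hPle : ∀ y, ‖Pproj s (η + gradm ψ y)‖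
      ≤ α⁻¹ * Fdens g r s (ξ + gradv φ y) (η + gradm ψ y) := by
    intro y
    have h7 := Fdens_lower hg hα hr.1 hs (ξ + gradv φ y) (η + gradm ψ y)
    have h8 : ‖Pproj s (η + gradm ψ y)‖
        = α⁻¹ * (α * ‖Pproj s (η + gradm ψ y)‖) := by
      field_simp
    rw [h8]
    exact mul_le_mul_of_nonneg_left h7 (inv_nonneg.mpr hα.le)
  have hintP : ∫ y in cubeQ, ‖Pproj s (η + gradm ψ y)‖ ≤ α⁻¹ * v := by
    calc ∫ y in cubeQ, ‖Pproj s (η + gradm ψ y)‖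
        ≤ ∫ y in cubeQ, α⁻¹ * Fdens g r s (ξ + gradv φ y) (η + gradm ψ y) :=
          integral_mono iP (ifa.const_mul _) hPle
      _ = α⁻¹ * ∫ y in cubeQ, Fdens g r s (ξ + gradv φ y) (η + gradm ψ y) :=
          integral_const_mul _ _
      _ = α⁻¹ * v := by rw [← hveq]
  -- integral comparison
  have hw_le : (∫ y in cubeQ, Fdens g rb sb (ξb + gradv φ y)
      (ηb + gradm (fun x => R (ψ x)) y)) ≤ v + A * V + B * (α⁻¹ * v) := by
    have hmono : (∫ y in cubeQ, Fdens g rb sb (ξb + gradv φ y)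
        (ηb + gradm (fun x => R (ψ x)) y))
        ≤ ∫ y in cubeQ, (Fdens g r s (ξ + gradv φ y) (η + gradm ψ y) + A
          + B * ‖Pproj s (η + gradm ψ y)‖) := by
      refine integral_mono_of_nonneg (ae_of_all _ fun y => Fdens_nonneg hg _ _ _ _)
        ((ifa.add iconst).add (iP.const_mul B)) (ae_of_all _ hpt)
    have hsplit : (∫ y in cubeQ, (Fdens g r s (ξ + gradv φ y) (η + gradm ψ y) + A
        + B * ‖Pproj s (η + gradm ψ y)‖))
        = v + V * A + B * ∫ y in cubeQ, ‖Pproj s (η + gradm ψ y)‖ := by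
      have e1 := integral_add (μ := volume.restrict cubeQ) (ifa.add iconst) (iP.const_mul B)
      have e2 := integral_add (μ := volume.restrict cubeQ) ifa iconst
      simp only [Pi.add_apply] at e1 e2
      rw [e1, e2, setIntegral_const, smul_eq_mul, measureReal_def, integral_const_mul, ← hveq]
    have h9 := mul_le_mul_of_nonneg_left hintP hB0
    rw [hsplit] at hmono
    calc (∫ y in cubeQ, Fdens g rb sb (ξb + gradv φ y)
        (ηb + gradm (fun x => R (ψ x)) y))
        ≤ v + V * A + B * ∫ y in cubeQ, ‖Pproj s (η + gradm ψ y)‖ := hmono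
      _ ≤ v + V * A + B * (α⁻¹ * v) := by linarith [h9]
      _ = v + A * V + B * (α⁻¹ * v) := by ring
  -- conclude
  have hv0 : 0 ≤ v := QFset_nonneg hg r s ξ η v ⟨φ, ψ, ⟨K1, hφ⟩, ⟨K2, hψ⟩, hφ0, hψ0, hveq⟩
  have h10 : B * (α⁻¹ * v) = (B / α) * v := by ring
  have h11 : (B / α) * v ≤ (B / α) * (sInf (QFset g r s ξ η) + ε') :=
    mul_le_mul_of_nonneg_left hvlt.le (by positivity)
  have h12 : ε' + B / α * ε' = ε := by rw [← hee, hDdef]; ring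
  have hvle : v ≤ sInf (QFset g r s ξ η) + ε' := hvlt.le
  have hAV : A * V = ((2 + β) * (‖η - ηb‖ + 2 * ‖s - sb‖ * ‖η‖) + 2 * ‖ξ - ξb‖) * V := by
    rw [hAdef]
  nlinarith [hQFb_le, hw_le, h10, h11, h12, hvle, hAV]

lemma final_arith {α β Kg V Q dn dr ds dx nη N : ℝ}
    (hα : 0 < α) (hβ : 0 < β) (hKg : 0 ≤ Kg) (hV : 0 ≤ V)
    (hQ0 : 0 ≤ Q) (hQU : Q ≤ V * (2 + 2 * β) * N)
    (hdn : 0 ≤ dn) (hdr : 0 ≤ dr) (hds : 0 ≤ ds) (hdx : 0 ≤ dx)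
    (hnη : 0 ≤ nη) (hnηN : nη ≤ N) (hN1 : 1 ≤ N) :
    Q * ((Kg * dx + dr) / α) + ((2 + β) * (dn + 2 * ds * nη) + 2 * dx) * V
      ≤ (V * (2 + 2 * β) * ((Kg + 1) / α + 3) + 1) * dn
        + (V * (2 + 2 * β) * ((Kg + 1) / α + 3) + 1) * ((dr + ds + dx) * N) := by
  have hN0 : 0 ≤ N := le_trans zero_le_one hN1
  have hδ0 : 0 ≤ dr + ds + dx := by linarith
  have f0 : (Kg * dx + dr) / α ≤ ((Kg + 1) * (dr + ds + dx)) / α := by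
    rw [div_le_div_iff_of_pos_right hα]
    nlinarith [mul_nonneg hKg hdr, mul_nonneg hKg hds]
  have f1 : Q * ((Kg * dx + dr) / α)
      ≤ (V * (2 + 2 * β) * N) * (((Kg + 1) * (dr + ds + dx)) / α) := by
    apply mul_le_mul hQU f0 (by positivity) ?_
    nlinarith [mul_nonneg (mul_nonneg hV (by linarith : (0:ℝ) ≤ 2 + 2*β)) hN0]
  have f2 : ds * nη ≤ (dr + ds + dx) * N := by
    nlinarith [mul_le_mul (by linarith : ds ≤ dr + ds + dx) hnηN hnη hδ0]
  have f3 : dx ≤ (dr + ds + dx) * N := by nlinarith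
  have f4 : (V * (2 + 2 * β) * N) * (((Kg + 1) * (dr + ds + dx)) / α)
      = V * (2 + 2 * β) * ((Kg + 1) / α) * ((dr + ds + dx) * N) := by ring
  rw [f4] at f1
  have f5 : V * (2 + 2 * β) * ((Kg + 1) / α) * ((dr + ds + dx) * N)
      ≤ (V * (2 + 2 * β) * ((Kg + 1) / α + 3)) * ((dr + ds + dx) * N) := by
    have : (0:ℝ) ≤ V * (2 + 2 * β) * 3 := by nlinarith
    nlinarith [mul_nonneg hδ0 hN0, mul_nonneg this (mul_nonneg hδ0 hN0)]
  have f6 : (2 + β) * dn * V ≤ (V * (2 + 2 * β) * ((Kg + 1) / α + 3)) * dn := by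
    have h1 : (2 + β) * V ≤ V * (2 + 2 * β) * ((Kg + 1) / α + 3) := by
      have h2 : (0:ℝ) ≤ (Kg + 1) / α := by positivity
      nlinarith [mul_nonneg hV (by linarith : (0:ℝ) ≤ β), mul_nonneg (mul_nonneg hV
        (by linarith : (0:ℝ) ≤ 2 + 2*β)) h2]
    nlinarith
  have f7 : (2 + β) * (2 * ds * nη) * V + 2 * dx * V
      ≤ (V * (2 + 2 * β) * 3) * ((dr + ds + dx) * N) := by
    have h3 : (2 + β) * (2 * ds * nη) * V ≤ (V * (2 + 2 * β) * 2) * ((dr + ds + dx) * N) := by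
      have := mul_le_mul_of_nonneg_left f2 (mul_nonneg (mul_nonneg hV
        (by linarith : (0:ℝ) ≤ 2 + 2*β)) (by norm_num : (0:ℝ) ≤ 2))
      nlinarith [mul_nonneg hds hnη, mul_nonneg hV (mul_nonneg hds hnη)]
    have h4 : 2 * dx * V ≤ (V * (2 + 2 * β) * 1) * ((dr + ds + dx) * N) := by
      have := mul_le_mul_of_nonneg_left f3 (mul_nonneg hV
        (by linarith : (0:ℝ) ≤ 2 + 2*β))
      nlinarith [mul_nonneg hV hdx]
    nlinarith [mul_nonneg hδ0 hN0, mul_nonneg hV (mul_nonneg hδ0 hN0)]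
  nlinarith [mul_nonneg hδ0 hN0]

theorem stmt15 (α β : ℝ) (hα : 0 < α) (hαβ : α ≤ β) (g : ℝ → ℝ)
    (hg_pos : ∀ t : ℝ, 0 ≤ t → 0 < g t ∧ g t ≤ 1)
    (hg_mono : ∀ t₁ t₂ : ℝ, 0 ≤ t₁ → t₁ ≤ t₂ → g t₂ ≤ g t₁)
    (hg_lip : ∃ K : NNReal, LipschitzOnWith K g (Set.Ici 0)) :
    ∃ c : ℝ, 0 < c ∧
      ∀ r rb : ℝ, r ∈ Set.Icc α β → rb ∈ Set.Icc α β →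
      ∀ s sb : E3, ‖s‖ = 1 → ‖sb‖ = 1 →
      ∀ ξ ξb : E2, ∀ η ηb : E32,
      (∀ j : Fin 2, ∑ i : Fin 3, s i * η (i, j) = 0) →
      (∀ j : Fin 2, ∑ i : Fin 3, sb i * ηb (i, j) = 0) →
      |QF g r s ξ η - QF g rb sb ξb ηb| ≤
        c * ‖η - ηb‖ +
          c * ((|r - rb| + ‖s - sb‖ + ‖ξ - ξb‖) *
            (1 + ‖ξ‖ + ‖ξb‖ + ‖η‖ + ‖ηb‖)) := by
  obtain ⟨Kg, hgl⟩ := hg_lip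
  have hβ0 : (0:ℝ) < β := lt_of_lt_of_le hα hαβ
  set V : ℝ := (volume cubeQ).toReal with hV
  have hV0 : 0 ≤ V := ENNReal.toReal_nonneg
  set c : ℝ := V * (2 + 2 * β) * ((Kg + 1) / α + 3) + 1 with hc
  have hc0 : 0 < c := by
    rw [hc]
    have h1 : (0:ℝ) ≤ (Kg + 1) / α + 3 := by positivity
    nlinarith [mul_nonneg (mul_nonneg hV0 (by linarith : (0:ℝ) ≤ 2 + 2*β)) h1]
  refine ⟨c, hc0, ?_⟩
  intro r rb hr hrb s sb hs hsb ξ ξb η ηb hηt hηbt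
  have hη : tang s η := fun j => by rw [aux_inner_E3]; exact hηt j
  have hηb : tang sb ηb := fun j => by rw [aux_inner_E3]; exact hηbt j
  have hQFa : QF g r s ξ η = sInf (QFset g r s ξ η) := rfl
  have hQFb : QF g rb sb ξb ηb = sInf (QFset g rb sb ξb ηb) := rfl
  set Qa : ℝ := sInf (QFset g r s ξ η) with hQa
  set Qb : ℝ := sInf (QFset g rb sb ξb ηb) with hQb
  set N : ℝ := 1 + ‖ξ‖ + ‖ξb‖ + ‖η‖ + ‖ηb‖ with hN
  have hN1 : 1 ≤ N := by
    rw [hN]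
    nlinarith [norm_nonneg ξ, norm_nonneg ξb, norm_nonneg η, norm_nonneg ηb]
  -- upper bounds on Qa, Qb
  have hQaU : Qa ≤ V * (2 + 2 * β) * N := by
    have h1 := sInf_QFset_le hg_pos r s ξ η
    have h2 := Fdens_le hg_pos (hα.le.trans hr.1) hr.2 hs ξ η
    have h3 : Fdens g r s ξ η ≤ (2 + 2 * β) * N := by
      rw [hN]
      nlinarith [norm_nonneg ξ, norm_nonneg ξb, norm_nonneg η, norm_nonneg ηb]
    calc Qa ≤ V * Fdens g r s ξ η := h1
      _ ≤ V * ((2 + 2 * β) * N) := mul_le_mul_of_nonneg_left h3 hV0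
      _ = V * (2 + 2 * β) * N := by ring
  have hQbU : Qb ≤ V * (2 + 2 * β) * N := by
    have h1 := sInf_QFset_le hg_pos rb sb ξb ηb
    have h2 := Fdens_le hg_pos (hα.le.trans hrb.1) hrb.2 hsb ξb ηb
    have h3 : Fdens g rb sb ξb ηb ≤ (2 + 2 * β) * N := by
      rw [hN]
      nlinarith [norm_nonneg ξ, norm_nonneg ξb, norm_nonneg η, norm_nonneg ηb]
    calc Qb ≤ V * Fdens g rb sb ξb ηb := h1
      _ ≤ V * ((2 + 2 * β) * N) := mul_le_mul_of_nonneg_left h3 hV0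
      _ = V * (2 + 2 * β) * N := by ring
  have hQa0 : 0 ≤ Qa := sInf_QFset_nonneg hg_pos r s ξ η
  have hQb0 : 0 ≤ Qb := sInf_QFset_nonneg hg_pos rb sb ξb ηb
  -- the two half estimates
  have h1 := QF_diff_half hg_pos hgl hα hr hrb hs hsb ξ ξb hη hηb
  have h2 := QF_diff_half hg_pos hgl hα hrb hr hsb hs ξb ξ hηb hη
  rw [← hQa, ← hQb, ← hV] at h1 h2
  -- symmetrize the norms in h2
  rw [norm_sub_rev ηb η, norm_sub_rev ξb ξ, norm_sub_rev sb s, abs_sub_comm rb r] at h2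
  have ha1 := final_arith (Kg := (Kg:ℝ)) (nη := ‖η‖) hα hβ0 Kg.coe_nonneg hV0 hQa0 hQaU
    (norm_nonneg (η - ηb)) (abs_nonneg (r - rb)) (norm_nonneg (s - sb)) (norm_nonneg (ξ - ξb))
    (norm_nonneg η) (by rw [hN]; nlinarith [norm_nonneg ξ, norm_nonneg ξb, norm_nonneg ηb]) hN1
  have ha2 := final_arith (Kg := (Kg:ℝ)) (nη := ‖ηb‖) hα hβ0 Kg.coe_nonneg hV0 hQb0 hQbU
    (norm_nonneg (η - ηb)) (abs_nonneg (r - rb)) (norm_nonneg (s - sb)) (norm_nonneg (ξ - ξb))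
    (norm_nonneg ηb) (by rw [hN]; nlinarith [norm_nonneg ξ, norm_nonneg ξb, norm_nonneg η]) hN1
  rw [hQFa, hQFb, abs_sub_le_iff]
  constructor
  · rw [← hc] at ha2
    calc Qa - Qb ≤ Qb * ((↑Kg * ‖ξ - ξb‖ + |r - rb|) / α)
        + ((2 + β) * (‖η - ηb‖ + 2 * ‖s - sb‖ * ‖ηb‖) + 2 * ‖ξ - ξb‖) * V := by
          linarith
      _ ≤ c * ‖η - ηb‖ + c * ((|r - rb| + ‖s - sb‖ + ‖ξ - ξb‖) * N) := ha2
  · rw [← hc] at ha1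
    calc Qb - Qa ≤ Qa * ((↑Kg * ‖ξ - ξb‖ + |r - rb|) / α)
        + ((2 + β) * (‖η - ηb‖ + 2 * ‖s - sb‖ * ‖η‖) + 2 * ‖ξ - ξb‖) * V := by
          linarith
      _ ≤ c * ‖η - ηb‖ + c * ((|r - rb| + ‖s - sb‖ + ‖ξ - ξb‖) * N) := ha1
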